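/- Let r be a W-valued 1-form on ℝ^{2n} and D = −δ + d + (i/ℏ)[r,·]. Then for every W-valued form a of homogeneous form-degree |a| (working with ℂ[[y^1,…,y^{2n}]][ℏ^{−1},ℏ]]-coefficients where negative powers of ℏ occur): (i) D(∂a/∂ℏ) − ∂(Da)/∂ℏ = −[ ∂((i/ℏ)r)/∂ℏ, a ] − (i/ℏ)( c_1(r,a) − (−1)^{|a|} c_1(a,r) ); (ii) D(Ea) − E(Da) = (i/2)δa − [ (i/ℏ)Er, a ] + c_1(r,a) − (−1)^{|a|} c_1(a,r). -/

import Mathlib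

/-!  Common definitions: formal Weyl algebras, Moyal products, Weyl-bundle valued
differential forms on ℝ^{2n}, Fedosov connections, star-products on smooth functions,
multidifferential operators and Hochschild coboundaries.  -/

noncomputable section
namespace StarPaper

open scoped BigOperators

/-! ### Formal power series in y -/

/-- The fiber coefficient ring `ℂ[[y^1, …, y^N]]`. -/
abbrev Wc (N : ℕ) := MvPowerSeries (Fin N) ℂ

/-- Build a formal power series from its coefficient function. -/
def Wc.mk {N : ℕ} (f : (Fin N →₀ ℕ) → ℂ) : Wc N := f

/-- Formal partial derivative `∂/∂y^i` on `ℂ[[y]]`. -/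
def yD {N : ℕ} (i : Fin N) (a : Wc N) : Wc N :=
  Wc.mk fun β => ((β i : ℂ) + 1) * MvPowerSeries.coeff (R := ℂ) (β + Finsupp.single i 1) a

/-- Formal iterated partial derivative `∂^α` on `ℂ[[y]]`. -/
def yDM {N : ℕ} (α : Fin N →₀ ℕ) (a : Wc N) : Wc N :=
  Wc.mk fun β =>
    (∏ i : Fin N, (((β i + α i).factorial : ℂ) / ((β i).factorial : ℂ))) *
      MvPowerSeries.coeff (R := ℂ) (β + α) a

/-- Iterated derivatives along a tuple of directions. -/
def iterD {R : Type*} {N : ℕ} (D : Fin N → R → R) : {k : ℕ} → (Fin k → Fin N) → R → R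
  | 0, _, a => a
  | _ + 1, v, a => D (v 0) (iterD D (fun t => v t.succ) a)

/-- The `k`-th term of the Moyal–Weyl product for a constant matrix `π`:
`((-iℏ/2)^k/k!) Σ π^{i₁j₁}⋯π^{i_kj_k} (∂^k a/∂y^{i₁}⋯) (∂^k b/∂y^{j₁}⋯)`. -/
def moyalTerm {R : Type*} [CommRing R] [Module ℂ R] {N : ℕ}
    (D : Fin N → R → R) (π : Matrix (Fin N) (Fin N) ℂ) (k : ℕ) (a b : R) : R :=
  ((-Complex.I / 2) ^ k / (Nat.factorial k : ℂ)) •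
    ∑ i : Fin k → Fin N, ∑ j : Fin k → Fin N,
      (∏ t, π (i t) (j t)) • (iterD D i a * iterD D j b)

/-- Moyal product on formal power series `Σ_m ℏ^m F_m` (coefficients `F : ℕ → R`). -/
def moyalN {R : Type*} [CommRing R] [Module ℂ R] {N : ℕ} (D : Fin N → R → R)
    (π : Matrix (Fin N) (Fin N) ℂ) (F G : ℕ → R) : ℕ → R :=
  fun m => ∑ k ∈ Finset.range (m + 1), ∑ l ∈ Finset.range (m - k + 1),
    moyalTerm D π k (F l) (G (m - k - l))

/-- Moyal product on formal Laurent series `Σ_m ℏ^m F_m` (coefficients `F : ℤ → R`);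
the sum over contributions is finite for series bounded below in `ℏ`-degree. -/
def moyalZ {R : Type*} [CommRing R] [Module ℂ R] {N : ℕ} (D : Fin N → R → R)
    (π : Matrix (Fin N) (Fin N) ℂ) (F G : ℤ → R) : ℤ → R :=
  fun m => ∑ᶠ p : ℕ × ℤ, moyalTerm D π p.1 (F p.2) (G (m - p.1 - p.2))

/-- Moyal term for an `ℏ`-dependent matrix `π(ℏ) = π₀ + ℏπ₁`: the part of the `k`-th
Moyal term in which the product of matrix entries contributes `ℏ^d`. -/
def moyalTermH {R : Type*} [CommRing R] [Module ℂ R] {N : ℕ} (D : Fin N → R → R)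
    (π0 π1 : Matrix (Fin N) (Fin N) ℂ) (k d : ℕ) (a b : R) : R :=
  ((-Complex.I / 2) ^ k / (Nat.factorial k : ℂ)) •
    ∑ i : Fin k → Fin N, ∑ j : Fin k → Fin N,
      (∑ T ∈ Finset.univ.powerset.filter (fun T : Finset (Fin k) => T.card = d),
          (∏ t ∈ T, π1 (i t) (j t)) * ∏ t ∈ Tᶜ, π0 (i t) (j t)) •
        (iterD D i a * iterD D j b)

/-- Moyal product built from the `ℏ`-dependent matrix `π(ℏ) = π₀ + ℏπ₁`. -/
def moyalNH {R : Type*} [CommRing R] [Module ℂ R] {N : ℕ} (D : Fin N → R → R)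
    (π0 π1 : Matrix (Fin N) (Fin N) ℂ) (F G : ℕ → R) : ℕ → R :=
  fun m => ∑ k ∈ Finset.range (m + 1), ∑ d ∈ Finset.range (m - k + 1),
    ∑ l ∈ Finset.range (m - k - d + 1),
      moyalTermH D π0 π1 k d (F l) (G (m - k - d - l))

/-- The standard Poisson matrix `π` on `ℝ^{2n}` (inverse of the standard symplectic
matrix `ω`, normalized by `Σ_m ω_{jm} π^{mn} = δ_j^n`). -/
def stdPi (n : ℕ) : Matrix (Fin (2 * n)) (Fin (2 * n)) ℂ :=
  Matrix.of fun i j =>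
    if (i : ℕ) + n = (j : ℕ) then 1 else if (j : ℕ) + n = (i : ℕ) then -1 else 0

/-- The standard symplectic matrix `ω_{ij}`. -/
def stdOmega (n : ℕ) : Matrix (Fin (2 * n)) (Fin (2 * n)) ℂ := -stdPi n

/-! ### The formal Weyl algebra `W = ℂ[[y,ℏ]]` -/

/-- The formal Weyl algebra as `ℏ`-coefficient sequences. -/
abbrev Wa (N : ℕ) := ℕ → Wc N

/-- Moyal–Weyl product on `W` for a constant matrix `π`. -/
def wmulPi {N : ℕ} (π : Matrix (Fin N) (Fin N) ℂ) (a b : Wa N) : Wa N := moyalN yD π a b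

/-- Moyal–Weyl product on `W` for the standard symplectic Poisson matrix. -/
def wmul {n : ℕ} (a b : Wa (2 * n)) : Wa (2 * n) := wmulPi (stdPi n) a b

/-- The unit `1 ∈ W`. -/
def oneW (N : ℕ) : Wa N := fun m => if m = 0 then 1 else 0

/-- Scalar multiplication by a formal power series `s ∈ ℂ[[ℏ]]` (given by its
coefficients `s : ℕ → ℂ`). -/
def hsmul {N : ℕ} (s : ℕ → ℂ) (a : Wa N) : Wa N :=
  fun m => ∑ l ∈ Finset.range (m + 1), s l • a (m - l)

/-- The operator `E = -(i/2) Σ_j y^j ∂/∂y^j` on `ℂ[[y]]`. -/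
def EulW {N : ℕ} (a : Wc N) : Wc N :=
  Wc.mk fun β => -Complex.I / 2 * (∑ i : Fin N, (β i : ℂ)) * MvPowerSeries.coeff (R := ℂ) β a

/-- `E` on the Weyl algebra, acting on each `ℏ`-coefficient. -/
def EulWa {N : ℕ} (a : Wa N) : Wa N := fun m => EulW (a m)

/-- Termwise derivative `∂/∂ℏ`. -/
def hD {N : ℕ} (a : Wa N) : Wa N := fun m => (((m + 1 : ℕ) : ℂ)) • a (m + 1)

/-- Multiplication by `ℏ`. -/
def hM {N : ℕ} (a : Wa N) : Wa N := fun m => match m with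
  | 0 => 0
  | Nat.succ m' => a m'

/-- Division by `ℏ` (exact on elements divisible by `ℏ`; discards the constant term). -/
def hInv {N : ℕ} (a : Wa N) : Wa N := fun m => a (m + 1)

/-- The `ℏ`-derivative of the Moyal–Weyl product structure:
`c₁(a,b) = ∂(a⋆b)/∂ℏ − (∂a/∂ℏ)⋆b − a⋆(∂b/∂ℏ)`. -/
def c1W {n : ℕ} (a b : Wa (2 * n)) : Wa (2 * n) :=
  hD (wmul a b) - wmul (hD a) b - wmul a (hD b)

/-! ### W-valued differential forms on ℝ^{2n} -/

/-- Points of `ℝ^{2n}`. -/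
abbrev Pt (n : ℕ) := Fin (2 * n) → ℝ

/-- `W`-valued exterior forms on `ℝ^{2n}`: the component at a finite index set
`S = {j₁ < ⋯ < j_q}` is the coefficient of `dx^{j₁} ∧ ⋯ ∧ dx^{j_q}`. -/
abbrev WF (n : ℕ) := Finset (Fin (2 * n)) → Pt n → Wa (2 * n)

/-- Sign `(-1)^{#{j ∈ S, j < i}}` for inserting `dx^i` in front of `dx^S`. -/
def insSign {N : ℕ} (S : Finset (Fin N)) (i : Fin N) : ℂ :=
  (-1) ^ (S.filter fun j => j < i).card

/-- Koszul sign for merging `dx^{S₁} ∧ dx^{S₂}` into increasing order. -/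
def shuffleSign {N : ℕ} (S1 S2 : Finset (Fin N)) : ℂ :=
  (-1) ^ ((S1 ×ˢ S2).filter fun p => p.2 < p.1).card

/-- `∂/∂y^i` on the Weyl algebra. -/
def yDa {N : ℕ} (i : Fin N) (w : Wa N) : Wa N := fun m => yD i (w m)

/-- The operator `δ a = Σ_i dx^i ∧ ∂a/∂y^i`. -/
def deltaW {n : ℕ} (a : WF n) : WF n :=
  fun S x => ∑ i ∈ S, insSign S i • yDa i (a (S.erase i) x)

/-- The partial derivative `∂/∂x^i` of a `W`-valued function, taken coefficientwise. -/
def xD {n : ℕ} (i : Fin (2 * n)) (f : Pt n → Wa (2 * n)) (x : Pt n) : Wa (2 * n) :=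
  fun m => Wc.mk fun β =>
    fderiv ℝ (fun x' => MvPowerSeries.coeff (R := ℂ) β (f x' m)) x (Pi.single i 1)

/-- The exterior derivative `d a = Σ_i dx^i ∧ ∂a/∂x^i` on `W`-valued forms. -/
def extD {n : ℕ} (a : WF n) : WF n :=
  fun S x => ∑ i ∈ S, insSign S i • xD i (a (S.erase i)) x

/-- The product on `W`-valued forms: Moyal–Weyl product combined with wedge product. -/
def wMulF {n : ℕ} (a b : WF n) : WF n :=
  fun S x => ∑ S1 ∈ S.powerset, shuffleSign S1 (S \ S1) • wmul (a S1 x) (b (S \ S1) x)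

/-- Graded commutator `[r, a] = r⋆a − (−1)^{|a|} a⋆r` with a form `r` of degree 1. -/
def comm1 {n : ℕ} (r a : WF n) : WF n :=
  fun S x => wMulF r a S x - (-1 : ℂ) ^ (S.card - 1) • wMulF a r S x

/-- Graded commutator `[u, a] = u⋆a − a⋆u` with a form `u` of even degree. -/
def commE {n : ℕ} (u a : WF n) : WF n := fun S x => wMulF u a S x - wMulF a u S x

/-- The connection `D = −δ + d + (i/ℏ)[r, ·]` determined by a `W`-valued 1-form `r`. -/
def fedD {n : ℕ} (r a : WF n) : WF n :=
  fun S x => -deltaW a S x + extD a S x + Complex.I • hInv (comm1 r a S x)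

/-- A `W`-valued form has smooth coefficients. -/
def WF.Smooth {n : ℕ} (a : WF n) : Prop :=
  ∀ S m β, ContDiff ℝ (⊤ : ℕ∞) fun x => MvPowerSeries.coeff (R := ℂ) β (a S x m)

/-- A `W`-valued form is homogeneous of form-degree `q`. -/
def isForm {n : ℕ} (q : ℕ) (a : WF n) : Prop := ∀ S, S.card ≠ q → a S = 0

/-- A `W`-valued form is scalar: all coefficients are independent of the `y` variables. -/
def isScalar {n : ℕ} (a : WF n) : Prop :=
  ∀ S x m β, β ≠ 0 → MvPowerSeries.coeff (R := ℂ) β (a S x m) = 0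

/-- The constant standard symplectic 2-form `ω = (1/2) Σ ω_{ij} dx^i ∧ dx^j`. -/
def omegaF (n : ℕ) : WF n :=
  fun S _ m =>
    if m = 0 then
      MvPowerSeries.C (σ := Fin (2 * n)) (R := ℂ)
        (∑ i : Fin (2 * n), ∑ j : Fin (2 * n),
          if i < j ∧ S = {i, j} then stdOmega n i j else 0)
    else 0

/-- The curvature `Ω = ω + δr − dr − (i/ℏ) r⋆r` of the connection `−δ + d + (i/ℏ)[r,·]`. -/
def curv {n : ℕ} (r : WF n) : WF n :=
  fun S x => omegaF n S x + deltaW r S x - extD r S x - Complex.I • hInv (wMulF r r S x)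

/-- The operator `δ⁻¹`, acting as `(1/(p+q)) Σ_k y^k ι_k` on the part of `y`-degree `p`
and form-degree `q` (and as `0` for `p = q = 0`). -/
def deltaInv {n : ℕ} (a : WF n) : WF n :=
  fun S x m => Wc.mk fun β =>
    ((((β.sum fun _ e => e) + S.card : ℕ) : ℂ))⁻¹ *
      ∑ k : Fin (2 * n),
        if k ∉ S ∧ 1 ≤ β k then
          insSign S k * MvPowerSeries.coeff (R := ℂ) (β - Finsupp.single k 1) (a (insert k S) x m)
        else 0

/-! ### x-independent W-valued exterior forms (the graded algebra W⊗Λ) -/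

/-- `W`-valued exterior forms with constant coefficients. -/
abbrev WL (n : ℕ) := Finset (Fin (2 * n)) → Wa (2 * n)

/-- `δ` on `W ⊗ Λ`. -/
def deltaWL {n : ℕ} (a : WL n) : WL n :=
  fun S => ∑ i ∈ S, insSign S i • yDa i (a (S.erase i))

/-- Product (Moyal combined with wedge) on `W ⊗ Λ`. -/
def wMulL {n : ℕ} (a b : WL n) : WL n :=
  fun S => ∑ S1 ∈ S.powerset, shuffleSign S1 (S \ S1) • wmul (a S1) (b (S \ S1))

/-- `E` on `W ⊗ Λ`, acting on the `W`-coefficients. -/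
def EulL {n : ℕ} (a : WL n) : WL n := fun S => EulWa (a S)

/-- The `W`-valued 1-form `Σ_{i,j} ω_{ij} y^i dx^j`. -/
def oydxW (n : ℕ) : WL n :=
  fun S m =>
    if m = 0 then
      ∑ j : Fin (2 * n),
        (if S = {j} then ∑ i : Fin (2 * n), stdOmega n i j • MvPowerSeries.X i else 0)
    else 0

/-- The 1-form `K₀ = −(Er − iℏ ∂r/∂ℏ + i r + (i/2) Σ ω_{ij} y^i dx^j)`. -/
def K0 {n : ℕ} (r : WF n) : WF n :=
  fun S x =>
    -(EulWa (r S x) - Complex.I • hM (hD (r S x)) + Complex.I • r S x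
      + (Complex.I / 2) • oydxW n S)

/-- The quantum Liouville-type operator `ρ(u) = (ℏ/i) ∂u/∂ℏ + E u`. -/
def rhoW {n : ℕ} (u : WF n) : WF n :=
  fun S x m => (-Complex.I * (m : ℂ)) • u S x m + EulW (u S x m)

/-- `c₁` extended to `W`-valued forms. -/
def c1F {n : ℕ} (a b : WF n) : WF n :=
  fun S x => ∑ S1 ∈ S.powerset, shuffleSign S1 (S \ S1) • c1W (a S1 x) (b (S \ S1) x)

/-! ### The Laurent (ℏ-inverted) Weyl algebra and forms -/

/-- The extended Weyl algebra `W⁺ = ℂ[[y]][ℏ⁻¹,ℏ]]` as `ℏ`-coefficient sequences. -/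
abbrev WaZ (N : ℕ) := ℤ → Wc N

/-- Moyal–Weyl product on `W⁺` for a constant matrix `π`. -/
def wmulZPi {N : ℕ} (π : Matrix (Fin N) (Fin N) ℂ) (a b : WaZ N) : WaZ N := moyalZ yD π a b

/-- Moyal–Weyl product on `W⁺` for the standard symplectic Poisson matrix. -/
def wmulZ {n : ℕ} (a b : WaZ (2 * n)) : WaZ (2 * n) := wmulZPi (stdPi n) a b

/-- `W⁺`-valued exterior forms on `ℝ^{2n}`. -/
abbrev WFZ (n : ℕ) := Finset (Fin (2 * n)) → Pt n → WaZ (2 * n)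

/-- `∂/∂y^i` on `W⁺`. -/
def yDaZ {N : ℕ} (i : Fin N) (w : WaZ N) : WaZ N := fun m => yD i (w m)

/-- `δ` on `W⁺`-valued forms. -/
def deltaZ {n : ℕ} (a : WFZ n) : WFZ n :=
  fun S x => ∑ i ∈ S, insSign S i • yDaZ i (a (S.erase i) x)

/-- `∂/∂x^i` on `W⁺`-valued functions. -/
def xDZ {n : ℕ} (i : Fin (2 * n)) (f : Pt n → WaZ (2 * n)) (x : Pt n) : WaZ (2 * n) :=
  fun m => Wc.mk fun β =>
    fderiv ℝ (fun x' => MvPowerSeries.coeff (R := ℂ) β (f x' m)) x (Pi.single i 1)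

/-- Exterior derivative on `W⁺`-valued forms. -/
def extDZ {n : ℕ} (a : WFZ n) : WFZ n :=
  fun S x => ∑ i ∈ S, insSign S i • xDZ i (a (S.erase i)) x

/-- Product on `W⁺`-valued forms. -/
def wMulZF {n : ℕ} (a b : WFZ n) : WFZ n :=
  fun S x => ∑ S1 ∈ S.powerset, shuffleSign S1 (S \ S1) • wmulZ (a S1 x) (b (S \ S1) x)

/-- Graded commutator with a 1-form, on `W⁺`-valued forms. -/
def comm1Z {n : ℕ} (r a : WFZ n) : WFZ n :=
  fun S x => wMulZF r a S x - (-1 : ℂ) ^ (S.card - 1) • wMulZF a r S x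

/-- Division by `ℏ` on `W⁺` (exact: a shift of Laurent coefficients). -/
def shiftZ {N : ℕ} (a : WaZ N) : WaZ N := fun m => a (m + 1)

/-- The connection `D = −δ + d + (i/ℏ)[r,·]` on `W⁺`-valued forms. -/
def fedDZ {n : ℕ} (r a : WFZ n) : WFZ n :=
  fun S x => -deltaZ a S x + extDZ a S x + Complex.I • shiftZ (comm1Z r a S x)

/-- Termwise `∂/∂ℏ` on `W⁺`. -/
def hDZ {N : ℕ} (a : WaZ N) : WaZ N := fun m => ((m + 1 : ℤ) : ℂ) • a (m + 1)

/-- `∂/∂ℏ` on `W⁺`-valued forms. -/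
def hDZF {n : ℕ} (a : WFZ n) : WFZ n := fun S x => hDZ (a S x)

/-- `E` on `W⁺`. -/
def EulZ {N : ℕ} (a : WaZ N) : WaZ N := fun m => EulW (a m)

/-- `E` on `W⁺`-valued forms. -/
def EulZF {n : ℕ} (a : WFZ n) : WFZ n := fun S x => EulZ (a S x)

/-- `c₁` on `W⁺`. -/
def c1Za {n : ℕ} (a b : WaZ (2 * n)) : WaZ (2 * n) :=
  hDZ (wmulZ a b) - wmulZ (hDZ a) b - wmulZ a (hDZ b)

/-- `c₁` on `W⁺`-valued forms. -/
def c1ZF {n : ℕ} (a b : WFZ n) : WFZ n :=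
  fun S x => ∑ S1 ∈ S.powerset, shuffleSign S1 (S \ S1) • c1Za (a S1 x) (b (S \ S1) x)

/-- Smoothness of the coefficients of a `W⁺`-valued form. -/
def WFZ.Smooth {n : ℕ} (a : WFZ n) : Prop :=
  ∀ S m β, ContDiff ℝ (⊤ : ℕ∞) fun x => MvPowerSeries.coeff (R := ℂ) β (a S x m)

/-- Homogeneity of form-degree `q` for `W⁺`-valued forms. -/
def isFormZ {n : ℕ} (q : ℕ) (a : WFZ n) : Prop := ∀ S, S.card ≠ q → a S = 0

/-- A `W⁺`-valued form has power series coefficients (no negative powers of `ℏ`). -/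
def PSupp {n : ℕ} (a : WFZ n) : Prop := ∀ S x m, m < 0 → a S x m = 0

/-- A Laurent series is bounded below in `ℏ`-degree. -/
def BddZ {α : Type*} [Zero α] (f : ℤ → α) : Prop :=
  ∃ N : ℕ, ∀ m : ℤ, m < -(N : ℤ) → f m = 0

/-! ### Smooth functions and star-products on ℝ^N -/

/-- Complex-valued functions on `ℝ^N`. -/
abbrev SmFn (N : ℕ) := (Fin N → ℝ) → ℂ

/-- Partial derivative `∂/∂x^i` of a (smooth) function. -/
def xDf {N : ℕ} (i : Fin N) (f : SmFn N) : SmFn N := fun x => fderiv ℝ f x (Pi.single i 1)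

/-- Iterated partial derivative `∂^α`. -/
def xDfM {N : ℕ} (α : Fin N →₀ ℕ) (f : SmFn N) : SmFn N :=
  (List.finRange N).foldr (fun i g => (xDf i)^[α i] g) f

/-- Formal power series with function coefficients: `C^∞(ℝ^N,ℂ)[[ℏ]]`. -/
abbrev SmSer (N : ℕ) := ℕ → SmFn N

/-- Formal Laurent series with function coefficients: `C^∞(ℝ^N,ℂ)[ℏ⁻¹,ℏ]]`. -/
abbrev SmLau (N : ℕ) := ℤ → SmFn N

/-- All coefficients of a series are smooth. -/
def SmSer.Smooth {N : ℕ} (F : SmSer N) : Prop := ∀ m, ContDiff ℝ (⊤ : ℕ∞) (F m)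

/-- All coefficients of a Laurent series are smooth. -/
def SmLau.Smooth {N : ℕ} (F : SmLau N) : Prop := ∀ m, ContDiff ℝ (⊤ : ℕ∞) (F m)

/-- The Moyal star-product on `C^∞(ℝ^N,ℂ)[[ℏ]]` for a constant matrix `π`. -/
def fMul {N : ℕ} (π : Matrix (Fin N) (Fin N) ℂ) (F G : SmSer N) : SmSer N :=
  moyalN xDf π F G

/-- The Moyal star-product on Laurent series. -/
def fMulZ {N : ℕ} (π : Matrix (Fin N) (Fin N) ℂ) (F G : SmLau N) : SmLau N :=
  moyalZ xDf π F G

/-- The Moyal star-product with `ℏ`-dependent matrix `π(ℏ) = π₀ + ℏπ₁`. -/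
def fMulH {N : ℕ} (π0 π1 : Matrix (Fin N) (Fin N) ℂ) (F G : SmSer N) : SmSer N :=
  moyalNH xDf π0 π1 F G

/-- The constant series `1`. -/
def oneSer (N : ℕ) : SmSer N := fun m => if m = 0 then (fun _ => 1) else 0

/-- The standard Poisson bracket `{f,g} = Σ π^{ij} ∂_i f ∂_j g` on `ℝ^{2n}`. -/
def pb (n : ℕ) (f g : SmFn (2 * n)) : SmFn (2 * n) :=
  fun x => ∑ i, ∑ j, stdPi n i j * xDf i f x * xDf j g x

/-! ### Multidifferential operators and star-products -/

/-- A `k`-multidifferential operator on `C^∞(ℝ^N,ℂ)`: a finite sum of terms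
`u(x) (∂^{α₁}f₁)⋯(∂^{α_k}f_k)`, recorded by its finitely many coefficients. -/
abbrev MDOp (N k : ℕ) := (Fin k → (Fin N →₀ ℕ)) →₀ SmFn N

/-- Action of a multidifferential operator. -/
def MDOp.app {N k : ℕ} (c : MDOp N k) (f : Fin k → SmFn N) : SmFn N :=
  fun x => c.sum fun T u => u x * ∏ t, xDfM (T t) (f t) x

/-- A multidifferential operator has smooth coefficients. -/
def MDOp.Smooth {N k : ℕ} (c : MDOp N k) : Prop := ∀ T, ContDiff ℝ (⊤ : ℕ∞) (c T)

/-- A family of bidifferential operators `C_k`, extended `ℂ[[ℏ]]`-bilinearly: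
`F ⋆ G = Σ ℏ^{k+l+l'} C_k(F_l, G_{l'})`. -/
def starN {N : ℕ} (C : ℕ → MDOp N 2) (F G : SmSer N) : SmSer N :=
  fun m => ∑ k ∈ Finset.range (m + 1), ∑ l ∈ Finset.range (m - k + 1),
    MDOp.app (C k) ![F l, G (m - k - l)]

/-- The `ℂ[ℏ⁻¹,ℏ]]`-bilinear extension of a star-product to Laurent series. -/
def starZ {N : ℕ} (C : ℕ → MDOp N 2) (F G : SmLau N) : SmLau N :=
  fun m => ∑ᶠ p : ℕ × ℤ, MDOp.app (C p.1) ![F p.2, G (m - p.1 - p.2)]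

/-- Action of a Laurent cochain `c = Σ_l ℏ^l c_l` of multidifferential operators
on a `k`-tuple of Laurent series. -/
def lac {N k : ℕ} (cc : ℤ → MDOp N k) (u : Fin k → SmLau N) : SmLau N :=
  fun m => ∑ᶠ v : Fin k → ℤ, MDOp.app (cc (m - ∑ t, v t)) fun t => u t (v t)

/-- A differential star-product on `ℝ^{2n}` quantizing the standard symplectic
structure: `f ⋆ g = Σ ℏ^k C_k(f,g)` with `C_k` bidifferential, `C₀(f,g) = fg`,
`1` a unit, `⋆` associative, and `C₁(f,g) − C₁(g,f) = −i{f,g}`. -/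
structure DiffStar (n : ℕ) where
  C : ℕ → MDOp (2 * n) 2
  smooth : ∀ k, MDOp.Smooth (C k)
  C0 : ∀ f g : SmFn (2 * n), MDOp.app (C 0) ![f, g] = f * g
  unit_left : ∀ F : SmSer (2 * n), SmSer.Smooth F → starN C (oneSer (2 * n)) F = F
  unit_right : ∀ F : SmSer (2 * n), SmSer.Smooth F → starN C F (oneSer (2 * n)) = F
  assoc : ∀ F G H : SmSer (2 * n), SmSer.Smooth F → SmSer.Smooth G → SmSer.Smooth H →
    starN C (starN C F G) H = starN C F (starN C G H)
  C1skew : ∀ f g : SmFn (2 * n), ContDiff ℝ (⊤ : ℕ∞) f → ContDiff ℝ (⊤ : ℕ∞) g →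
    MDOp.app (C 1) ![f, g] - MDOp.app (C 1) ![g, f] = fun x => -Complex.I * pb n f g x

/-! ### Hochschild coboundary -/

/-- The Hochschild coboundary `b̃` of a `k`-cochain with respect to a product `mul`. -/
def hoch {A : Type*} [AddCommGroup A] (mul : A → A → A) {k : ℕ}
    (c : (Fin k → A) → A) : (Fin (k + 1) → A) → A :=
  fun u =>
    mul (u 0) (c fun t => u t.succ)
      + ∑ i : Fin k, ((-1 : ℤ) ^ ((i : ℕ) + 1)) •
          c (fun j => if (j : ℕ) < (i : ℕ) then u j.castSucc
            else if (j : ℕ) = (i : ℕ) then mul (u j.castSucc) (u j.succ)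
            else u j.succ)
      + ((-1 : ℤ) ^ (k + 1)) • mul (c fun t => u t.castSucc) (u (Fin.last k))

/-! ### Formal differential operators on ℂ[[y]] -/

/-- A formal `k`-differential operator on `ℂ[[y^1,…,y^N]]`:
`c(a₁,…,a_k) = Σ_T u^T (∂^{T 1}a₁)⋯(∂^{T k}a_k)` with coefficients
`u^T ∈ ℂ[[y]]` such that for each degree `d` only finitely many tuples `T` have a
coefficient containing a nonzero monomial of degree `≤ d`. -/
structure FDOp (N k : ℕ) where
  u : (Fin k → (Fin N →₀ ℕ)) → Wc N
  fin : ∀ d : ℕ,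
    {T : Fin k → (Fin N →₀ ℕ) | ∃ β : Fin N →₀ ℕ,
      (β.sum fun _ e => e) ≤ d ∧ MvPowerSeries.coeff (R := ℂ) β (u T) ≠ 0}.Finite

/-- Action of a formal differential operator (the defining sum converges in the
`y`-adic topology; each coefficient receives only finitely many contributions). -/
def FDOp.app {N k : ℕ} (P : FDOp N k) (a : Fin k → Wc N) : Wc N :=
  Wc.mk fun β => ∑ᶠ T : Fin k → (Fin N →₀ ℕ),
    MvPowerSeries.coeff (R := ℂ) β (P.u T * ∏ t, yDM (T t) (a t))

/-- Action of a Laurent cochain `c = Σ_l ℏ^l c_l` of formal differential operators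
on a `k`-tuple of elements of `W⁺`. -/
def flac {N k : ℕ} (cc : ℤ → FDOp N k) (a : Fin k → WaZ N) : WaZ N :=
  fun m => ∑ᶠ v : Fin k → ℤ, FDOp.app (cc (m - ∑ t, v t)) fun t => a t (v t)

/-! ### Flat sections, Taylor series and quantum exponential -/

/-- Fiberwise Taylor series of a smooth function at `x`. -/
def taylorW {N : ℕ} (f : SmFn N) (x : Fin N → ℝ) : Wc N :=
  Wc.mk fun β => (∏ i : Fin N, ((β i).factorial : ℂ))⁻¹ * xDfM β f x

/-- Sections of the Weyl bundle over `ℝ^{2n}` (W-valued 0-forms). -/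
abbrev Sect (n : ℕ) := Pt n → Wa (2 * n)

/-- The fiberwise Taylor lift of a series of smooth functions. -/
def taylorS {n : ℕ} (F : SmSer (2 * n)) : Sect n := fun x m => taylorW (F m) x

/-- A section has smooth coefficients. -/
def Sect.Smooth {n : ℕ} (u : Sect n) : Prop :=
  ∀ m β, ContDiff ℝ (⊤ : ℕ∞) fun x => MvPowerSeries.coeff (R := ℂ) β (u x m)

/-- A section is flat for `D = −δ + d`: its component equations read
`∂u/∂x^i = ∂u/∂y^i` for all `i`. -/
def Sect.Flat {n : ℕ} (u : Sect n) : Prop :=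
  ∀ (i : Fin (2 * n)) (x : Pt n), xD i u x = yDa i (u x)

/-- The symbol map `σ(u) = u|_{y=0}`. -/
def sigma {n : ℕ} (u : Sect n) : SmSer (2 * n) :=
  fun m x => MvPowerSeries.coeff (R := ℂ) 0 (u x m)

/-- Fiberwise Moyal–Weyl product of sections. -/
def wmulS {n : ℕ} (u v : Sect n) : Sect n := fun x => wmul (u x) (v x)

/-! ### Vector fields and Liouville-type operators -/

/-- Action of a vector field `X = Σ_j X^j ∂_j` on a function. -/
def XAct {N : ℕ} (X : Fin N → SmFn N) (f : SmFn N) : SmFn N :=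
  fun x => ∑ j, X j x * xDf j f x

/-- A smooth function viewed as a series concentrated in `ℏ`-degree `0`. -/
def embS {N : ℕ} (f : SmFn N) : SmSer N := fun m => if m = 0 then f else 0

/-- The Hochschild coboundary `b̃X(f,g) = f⋆(Xg) − X(f⋆g) + (Xf)⋆g` of a vector
field, for the Moyal star-product with constant matrix `π`. -/
def bXMoyal {N : ℕ} (π : Matrix (Fin N) (Fin N) ℂ) (X : Fin N → SmFn N)
    (f g : SmFn N) : SmSer N :=
  fMul π (embS f) (embS (XAct X g)) - (fun m => XAct X (fMul π (embS f) (embS g) m))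
    + fMul π (embS (XAct X f)) (embS g)

/-- The operator `ℏ ∂_ℏ + X` on `C^∞(ℝ^N,ℂ)[[ℏ]]`. -/
def LOp {N : ℕ} (X : Fin N → SmFn N) (F : SmSer N) : SmSer N :=
  fun m x => (m : ℂ) * F m x + XAct X (F m) x

/-- The derivative of a star-product with respect to `ℏ`:
`c(f,g) = Σ_{k≥1} k ℏ^{k-1} C_k(f,g)`, extended `ℂ[[ℏ]]`-bilinearly. -/
def dStar {N : ℕ} (C : ℕ → MDOp N 2) (F G : SmSer N) : SmSer N :=
  fun m => ∑ k ∈ Finset.Icc 1 (m + 1), (k : ℂ) •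
    ∑ l ∈ Finset.range (m + 1 - k + 1), MDOp.app (C k) ![F l, G (m + 1 - k - l)]

end StarPaper
namespace StarPaper

/-! ### Auxiliary lemmas -/

section Aux

variable {N : ℕ}

lemma coeff_mk (f : (Fin N →₀ ℕ) → ℂ) (β : Fin N →₀ ℕ) :
    MvPowerSeries.coeff (R := ℂ) β (Wc.mk f) = f β := rfl

lemma yD_add (i : Fin N) (u v : Wc N) : yD i (u + v) = yD i u + yD i v := by
  apply MvPowerSeries.ext; intro β
  simp [yD, coeff_mk, map_add, mul_add]

lemma yD_smul (i : Fin N) (c : ℂ) (u : Wc N) : yD i (c • u) = c • yD i u := by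
  apply MvPowerSeries.ext; intro β
  simp [yD, coeff_mk, map_smul, smul_eq_mul]; ring

lemma yD_zero (i : Fin N) : yD i (0 : Wc N) = 0 := by
  apply MvPowerSeries.ext; intro β
  simp [yD, coeff_mk]

lemma yD_neg (i : Fin N) (u : Wc N) : yD i (-u) = -yD i u := by
  have := yD_smul i (-1 : ℂ) u; simpa using this

lemma yD_sub (i : Fin N) (u v : Wc N) : yD i (u - v) = yD i u - yD i v := by
  rw [sub_eq_add_neg, yD_add, yD_neg, sub_eq_add_neg]

lemma EulW_add (u v : Wc N) : EulW (u + v) = EulW u + EulW v := by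
  apply MvPowerSeries.ext; intro β
  simp [EulW, coeff_mk, map_add, mul_add]

lemma EulW_smul (c : ℂ) (u : Wc N) : EulW (c • u) = c • EulW u := by
  apply MvPowerSeries.ext; intro β
  simp [EulW, coeff_mk, map_smul, smul_eq_mul]; ring

/-- `EulW` as a linear map. -/
def EulWL (N : ℕ) : Wc N →ₗ[ℂ] Wc N :=
  { toFun := EulW, map_add' := EulW_add, map_smul' := EulW_smul }

lemma EulW_sum {α : Type*} (s : Finset α) (f : α → Wc N) :
    EulW (∑ x ∈ s, f x) = ∑ x ∈ s, EulW (f x) :=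
  map_sum (EulWL N) f s

lemma sumdeg_add_single (β : Fin N →₀ ℕ) (i : Fin N) :
    (∑ j : Fin N, ((((β + Finsupp.single i 1 : Fin N →₀ ℕ)) j : ℕ) : ℂ)) =
      (∑ j : Fin N, ((β j : ℕ) : ℂ)) + 1 := by
  have h : ∀ j : Fin N, ((((β + Finsupp.single i 1 : Fin N →₀ ℕ)) j : ℕ) : ℂ)
      = ((β j : ℕ) : ℂ) + (if i = j then 1 else 0) := by
    intro j
    rw [Finsupp.add_apply, Finsupp.single_apply]
    push_cast
    split <;> simp
  rw [Finset.sum_congr rfl fun j _ => h j, Finset.sum_add_distrib]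
  simp

lemma EulW_yD (i : Fin N) (u : Wc N) :
    EulW (yD i u) = yD i (EulW u) + (Complex.I / 2) • yD i u := by
  apply MvPowerSeries.ext; intro β
  simp only [EulW, yD, coeff_mk, map_add, map_smul, smul_eq_mul]
  rw [sumdeg_add_single]
  ring

lemma EulW_mul (u v : Wc N) : EulW (u * v) = EulW u * v + u * EulW v := by
  classical
  apply MvPowerSeries.ext; intro β
  simp only [map_add, MvPowerSeries.coeff_mul]
  have h1 : MvPowerSeries.coeff (R := ℂ) β (EulW (u * v))
      = ∑ p ∈ Finset.HasAntidiagonal.antidiagonal β,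
          (-Complex.I / 2) * (∑ j : Fin N, ((β j : ℕ) : ℂ)) *
            (MvPowerSeries.coeff (R := ℂ) p.1 u * MvPowerSeries.coeff (R := ℂ) p.2 v) := by
    simp only [EulW, coeff_mk, MvPowerSeries.coeff_mul, Finset.mul_sum]
  rw [h1]
  have h2 : ∀ p ∈ Finset.HasAntidiagonal.antidiagonal β,
      (-Complex.I / 2) * (∑ j : Fin N, ((β j : ℕ) : ℂ)) *
          (MvPowerSeries.coeff (R := ℂ) p.1 u * MvPowerSeries.coeff (R := ℂ) p.2 v)
        = MvPowerSeries.coeff (R := ℂ) p.1 (EulW u) * MvPowerSeries.coeff (R := ℂ) p.2 v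
          + MvPowerSeries.coeff (R := ℂ) p.1 u * MvPowerSeries.coeff (R := ℂ) p.2 (EulW v) := by
    intro p hp
    rw [Finset.HasAntidiagonal.mem_antidiagonal] at hp
    have hβ : (∑ j : Fin N, ((β j : ℕ) : ℂ))
        = (∑ j : Fin N, ((p.1 j : ℕ) : ℂ)) + (∑ j : Fin N, ((p.2 j : ℕ) : ℂ)) := by
      rw [← Finset.sum_add_distrib]
      apply Finset.sum_congr rfl
      intro j _
      rw [← hp]
      push_cast [Finsupp.add_apply]
      ring
    simp only [EulW, coeff_mk]
    rw [hβ]; ring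
  rw [Finset.sum_congr rfl h2, Finset.sum_add_distrib]

lemma iterD_add {k : ℕ} (v : Fin k → Fin N) (a b : Wc N) :
    iterD yD v (a + b) = iterD yD v a + iterD yD v b := by
  induction k with
  | zero => rfl
  | succ k ih => simp only [iterD, ih, yD_add]

lemma iterD_smul {k : ℕ} (v : Fin k → Fin N) (c : ℂ) (a : Wc N) :
    iterD yD v (c • a) = c • iterD yD v a := by
  induction k with
  | zero => rfl
  | succ k ih => simp only [iterD, ih, yD_smul]

lemma iterD_zero {k : ℕ} (v : Fin k → Fin N) : iterD yD v (0 : Wc N) = 0 := by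
  induction k with
  | zero => rfl
  | succ k ih => simp only [iterD, ih, yD_zero]

lemma EulW_iterD {k : ℕ} (v : Fin k → Fin N) (a : Wc N) :
    EulW (iterD yD v a) = iterD yD v (EulW a) + ((Complex.I / 2) * k) • iterD yD v a := by
  induction k with
  | zero => simp [iterD]
  | succ k ih =>
    simp only [iterD, ih, yD_add, yD_smul, EulW_yD]
    push_cast
    rw [show (Complex.I / 2) * ((k : ℂ) + 1) = (Complex.I / 2 * k) + Complex.I / 2 by ring,
      add_smul]
    abel

lemma moyalTerm_zero_left (π : Matrix (Fin N) (Fin N) ℂ) (k : ℕ) (b : Wc N) :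
    moyalTerm yD π k (0 : Wc N) b = 0 := by
  simp [moyalTerm, iterD_zero]

lemma moyalTerm_zero_right (π : Matrix (Fin N) (Fin N) ℂ) (k : ℕ) (a : Wc N) :
    moyalTerm yD π k a (0 : Wc N) = 0 := by
  simp [moyalTerm, iterD_zero]

lemma moyalTerm_smul_left (π : Matrix (Fin N) (Fin N) ℂ) (k : ℕ) (c : ℂ) (a b : Wc N) :
    moyalTerm yD π k (c • a) b = c • moyalTerm yD π k a b := by
  simp only [moyalTerm, iterD_smul, smul_mul_assoc]
  rw [smul_comm c]
  congr 1
  rw [Finset.smul_sum]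
  refine Finset.sum_congr rfl fun i _ => ?_
  rw [Finset.smul_sum]
  refine Finset.sum_congr rfl fun j _ => ?_
  rw [smul_comm]

lemma moyalTerm_smul_right (π : Matrix (Fin N) (Fin N) ℂ) (k : ℕ) (c : ℂ) (a b : Wc N) :
    moyalTerm yD π k a (c • b) = c • moyalTerm yD π k a b := by
  simp only [moyalTerm, iterD_smul, mul_smul_comm]
  rw [smul_comm c]
  congr 1
  rw [Finset.smul_sum]
  refine Finset.sum_congr rfl fun i _ => ?_
  rw [Finset.smul_sum]
  refine Finset.sum_congr rfl fun j _ => ?_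
  rw [smul_comm]

lemma moyalTerm_add_left (π : Matrix (Fin N) (Fin N) ℂ) (k : ℕ) (a a' b : Wc N) :
    moyalTerm yD π k (a + a') b = moyalTerm yD π k a b + moyalTerm yD π k a' b := by
  simp only [moyalTerm, iterD_add, add_mul, smul_add, Finset.sum_add_distrib]

lemma moyalTerm_add_right (π : Matrix (Fin N) (Fin N) ℂ) (k : ℕ) (a b b' : Wc N) :
    moyalTerm yD π k a (b + b') = moyalTerm yD π k a b + moyalTerm yD π k a b' := by
  simp only [moyalTerm, iterD_add, mul_add, smul_add, Finset.sum_add_distrib]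

lemma moyalTerm_sub_left (π : Matrix (Fin N) (Fin N) ℂ) (k : ℕ) (a a' b : Wc N) :
    moyalTerm yD π k (a - a') b = moyalTerm yD π k a b - moyalTerm yD π k a' b := by
  have h := moyalTerm_add_left π k a' (a - a') b
  rw [add_sub_cancel] at h
  rw [h]; abel

lemma EulW_moyalTerm (π : Matrix (Fin N) (Fin N) ℂ) (k : ℕ) (a b : Wc N) :
    EulW (moyalTerm yD π k a b)
      = moyalTerm yD π k (EulW a) b + moyalTerm yD π k a (EulW b)
        + (Complex.I * k) • moyalTerm yD π k a b := by
  simp only [moyalTerm, EulW_smul, EulW_sum]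
  rw [smul_comm (Complex.I * (k:ℂ)), ← smul_add, ← smul_add]
  congr 1
  rw [Finset.smul_sum, ← Finset.sum_add_distrib, ← Finset.sum_add_distrib]
  refine Finset.sum_congr rfl fun i _ => ?_
  rw [Finset.smul_sum, ← Finset.sum_add_distrib, ← Finset.sum_add_distrib]
  refine Finset.sum_congr rfl fun j _ => ?_
  rw [smul_comm (Complex.I * (k:ℂ)), ← smul_add, ← smul_add]
  congr 1
  rw [EulW_mul, EulW_iterD, EulW_iterD]
  rw [show Complex.I * (k:ℂ) = (Complex.I/2) * k + (Complex.I/2) * k by ring, add_smul]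
  rw [add_mul, mul_add, smul_mul_assoc, mul_smul_comm]
  abel

/-! WaZ-level operator lemmas -/

/-- Bounded below in `ℏ`-degree by `c`. -/
def LB {N : ℕ} (c : ℤ) (F : WaZ N) : Prop := ∀ m, m < c → F m = 0

lemma LB_shiftZ {c : ℤ} {F : WaZ N} (h : LB c F) : LB (c - 1) (shiftZ F) := by
  intro m hm; exact h _ (by omega)

lemma LB_hDZ {c : ℤ} {F : WaZ N} (h : LB c F) : LB (c - 1) (hDZ F) := by
  intro m hm; simp [hDZ, h _ (by omega : m + 1 < c)]

lemma EulW_zero : EulW (0 : Wc N) = 0 := by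
  have := EulW_smul (N := N) 0 0; simpa using this

lemma EulW_neg (u : Wc N) : EulW (-u) = -EulW u := by
  have := EulW_smul (N := N) (-1) u; simpa using this

lemma EulZ_zero : EulZ (0 : WaZ N) = 0 := by
  funext m; exact EulW_zero

lemma LB_EulZ {c : ℤ} {F : WaZ N} (h : LB c F) : LB c (EulZ F) := by
  intro m hm
  simp only [EulZ, h _ hm, EulW_zero]

lemma LB_smul {c : ℤ} (d : ℂ) {F : WaZ N} (h : LB c F) : LB c (d • F) := by
  intro m hm; simp [Pi.smul_apply, h _ hm]

lemma LB_mono {c c' : ℤ} (hcc : c' ≤ c) {F : WaZ N} (h : LB c F) : LB c' F :=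
  fun m hm => h m (by omega)

lemma hDZ_add (u v : WaZ N) : hDZ (u + v) = hDZ u + hDZ v := by
  funext m; simp [hDZ, smul_add]

lemma hDZ_neg (u : WaZ N) : hDZ (-u) = -hDZ u := by
  funext m; simp [hDZ]

lemma hDZ_sub (u v : WaZ N) : hDZ (u - v) = hDZ u - hDZ v := by
  funext m; simp [hDZ, smul_sub]

lemma hDZ_smul (c : ℂ) (u : WaZ N) : hDZ (c • u) = c • hDZ u := by
  funext m; simp only [hDZ, Pi.smul_apply]; rw [smul_comm]

lemma hDZ_zero : hDZ (0 : WaZ N) = 0 := by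
  funext m; simp [hDZ]

lemma shiftZ_add (u v : WaZ N) : shiftZ (u + v) = shiftZ u + shiftZ v := rfl

lemma shiftZ_sub (u v : WaZ N) : shiftZ (u - v) = shiftZ u - shiftZ v := rfl

lemma shiftZ_smul (c : ℂ) (u : WaZ N) : shiftZ (c • u) = c • shiftZ u := rfl

lemma EulZ_add (u v : WaZ N) : EulZ (u + v) = EulZ u + EulZ v := by
  funext m; simp [EulZ, EulW_add]

lemma EulZ_sub (u v : WaZ N) : EulZ (u - v) = EulZ u - EulZ v := by
  funext m
  simp only [EulZ, Pi.sub_apply, sub_eq_add_neg, EulW_add]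
  congr 1
  have := EulW_smul (N := N) (-1) (v m); simpa using this

lemma EulZ_smul (c : ℂ) (u : WaZ N) : EulZ (c • u) = c • EulZ u := by
  funext m; simp [EulZ, Pi.smul_apply, EulW_smul]

lemma hDZ_shiftZ (u : WaZ N) : hDZ (shiftZ u) = shiftZ (hDZ u) - shiftZ (shiftZ u) := by
  funext m
  simp only [hDZ, shiftZ, Pi.sub_apply]
  rw [show ((m + 1 + 1 : ℤ) : ℂ) = ((m + 1 : ℤ) : ℂ) + 1 by push_cast; ring, add_smul]
  simp

lemma EulZ_shiftZ (u : WaZ N) : EulZ (shiftZ u) = shiftZ (EulZ u) := rfl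

/-! Support of the Moyal families -/

lemma moyal_support (π : Matrix (Fin N) (Fin N) ℂ) {F G : WaZ N} {cF cG : ℤ}
    (hF : LB cF F) (hG : LB cG G) (m : ℤ) :
    (Function.support fun p : ℕ × ℤ =>
        moyalTerm yD π p.1 (F p.2) (G (m - p.1 - p.2))) ⊆
      ↑(Finset.range ((m - cF - cG).toNat + 1) ×ˢ Finset.Icc cF (m - cG)) := by
  intro p hp
  simp only [Function.mem_support] at hp
  have h1 : cF ≤ p.2 := by
    by_contra h
    exact hp (by rw [hF p.2 (by omega)]; exact moyalTerm_zero_left π p.1 _)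
  have h2 : cG ≤ m - p.1 - p.2 := by
    by_contra h
    exact hp (by rw [hG _ (by omega)]; exact moyalTerm_zero_right π p.1 _)
  simp only [Finset.coe_product, Set.mem_prod, Finset.mem_coe, Finset.mem_range,
    Finset.mem_Icc]
  refine ⟨?_, h1, by omega⟩
  have : (p.1 : ℤ) ≤ m - cF - cG := by omega
  have h3 := Int.self_le_toNat (m - cF - cG)
  omega

lemma moyal_support_w (π : Matrix (Fin N) (Fin N) ℂ) {F G : WaZ N} {cF cG : ℤ}
    (hF : LB cF F) (hG : LB cG G) (m : ℤ) (w : ℕ × ℤ → ℂ) :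
    (Function.support fun p : ℕ × ℤ =>
        w p • moyalTerm yD π p.1 (F p.2) (G (m - p.1 - p.2))) ⊆
      ↑(Finset.range ((m - cF - cG).toNat + 1) ×ˢ Finset.Icc cF (m - cG)) := by
  refine subset_trans ?_ (moyal_support π hF hG m)
  intro p hp
  simp only [Function.mem_support] at hp ⊢
  intro h; exact hp (by rw [h, smul_zero])

lemma moyal_finite (π : Matrix (Fin N) (Fin N) ℂ) {F G : WaZ N} {cF cG : ℤ}
    (hF : LB cF F) (hG : LB cG G) (m : ℤ) (w : ℕ × ℤ → ℂ) :
    (Function.support fun p : ℕ × ℤ =>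
        w p • moyalTerm yD π p.1 (F p.2) (G (m - p.1 - p.2))).Finite :=
  Set.Finite.subset (Finset.finite_toSet _) (moyal_support_w π hF hG m w)

lemma moyal_finite' (π : Matrix (Fin N) (Fin N) ℂ) {F G : WaZ N} {cF cG : ℤ}
    (hF : LB cF F) (hG : LB cG G) (m : ℤ) :
    (Function.support fun p : ℕ × ℤ =>
        moyalTerm yD π p.1 (F p.2) (G (m - p.1 - p.2))).Finite :=
  Set.Finite.subset (Finset.finite_toSet _) (moyal_support π hF hG m)

/-! Lemmas on the Laurent Moyal product -/

/-- The `Σ_k k ℏ^k B_k(F,G)` series (so that `ℏ c₁(F,G) = i⁻¹`-times the `E`-defect). -/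
def kTZ (π : Matrix (Fin N) (Fin N) ℂ) (F G : WaZ N) : WaZ N :=
  fun m => ∑ᶠ p : ℕ × ℤ, ((p.1 : ℕ) : ℂ) • moyalTerm yD π p.1 (F p.2) (G (m - p.1 - p.2))

lemma wmulZPi_shift_left (π : Matrix (Fin N) (Fin N) ℂ) (F G : WaZ N) :
    wmulZPi π (shiftZ F) G = shiftZ (wmulZPi π F G) := by
  funext m
  show (∑ᶠ p : ℕ × ℤ, moyalTerm yD π p.1 (F (p.2 + 1)) (G (m - p.1 - p.2)))
      = ∑ᶠ p : ℕ × ℤ, moyalTerm yD π p.1 (F p.2) (G (m + 1 - p.1 - p.2))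
  refine finsum_eq_of_bijective (fun p : ℕ × ℤ => (p.1, p.2 + 1))
    ⟨fun p q h => ?_, fun p => ⟨(p.1, p.2 - 1), by simp⟩⟩ fun p => ?_
  · simp only [Prod.mk.injEq] at h
    exact Prod.ext h.1 (by omega)
  · have h : m + 1 - (p.1 : ℤ) - (p.2 + 1) = m - p.1 - p.2 := by ring
    show moyalTerm yD π p.1 (F (p.2 + 1)) (G (m - p.1 - p.2))
        = moyalTerm yD π p.1 (F (p.2 + 1)) (G (m + 1 - p.1 - (p.2 + 1)))
    rw [h]

lemma wmulZPi_shift_right (π : Matrix (Fin N) (Fin N) ℂ) (F G : WaZ N) :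
    wmulZPi π F (shiftZ G) = shiftZ (wmulZPi π F G) := by
  funext m
  show (∑ᶠ p : ℕ × ℤ, moyalTerm yD π p.1 (F p.2) (G (m - p.1 - p.2 + 1)))
      = ∑ᶠ p : ℕ × ℤ, moyalTerm yD π p.1 (F p.2) (G (m + 1 - p.1 - p.2))
  refine finsum_congr fun p => ?_
  have h : m - (p.1 : ℤ) - p.2 + 1 = m + 1 - p.1 - p.2 := by ring
  rw [h]

lemma wmulZPi_smul_left (π : Matrix (Fin N) (Fin N) ℂ) (c : ℂ) (F G : WaZ N) :
    wmulZPi π (c • F) G = c • wmulZPi π F G := by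
  funext m
  show (∑ᶠ p : ℕ × ℤ, moyalTerm yD π p.1 (c • F p.2) (G (m - p.1 - p.2)))
      = c • ∑ᶠ p : ℕ × ℤ, moyalTerm yD π p.1 (F p.2) (G (m - p.1 - p.2))
  rw [smul_finsum]
  exact finsum_congr fun p => moyalTerm_smul_left π p.1 c _ _

lemma wmulZPi_smul_right (π : Matrix (Fin N) (Fin N) ℂ) (c : ℂ) (F G : WaZ N) :
    wmulZPi π F (c • G) = c • wmulZPi π F G := by
  funext m
  show (∑ᶠ p : ℕ × ℤ, moyalTerm yD π p.1 (F p.2) (c • G (m - p.1 - p.2)))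
      = c • ∑ᶠ p : ℕ × ℤ, moyalTerm yD π p.1 (F p.2) (G (m - p.1 - p.2))
  rw [smul_finsum]
  exact finsum_congr fun p => moyalTerm_smul_right π p.1 c _ _

lemma wmulZPi_zero_left (π : Matrix (Fin N) (Fin N) ℂ) (G : WaZ N) :
    wmulZPi π 0 G = 0 := by
  funext m
  show (∑ᶠ p : ℕ × ℤ, moyalTerm yD π p.1 (0 : Wc N) (G (m - p.1 - p.2))) = 0
  simp only [moyalTerm_zero_left]
  exact finsum_zero

lemma wmulZPi_zero_right (π : Matrix (Fin N) (Fin N) ℂ) (F : WaZ N) :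
    wmulZPi π F 0 = 0 := by
  funext m
  show (∑ᶠ p : ℕ × ℤ, moyalTerm yD π p.1 (F p.2) (0 : Wc N)) = 0
  simp only [moyalTerm_zero_right]
  exact finsum_zero

lemma wmulZPi_sub_left (π : Matrix (Fin N) (Fin N) ℂ) {F F' G : WaZ N} {cF cF' cG : ℤ}
    (hF : LB cF F) (hF' : LB cF' F') (hG : LB cG G) :
    wmulZPi π (F - F') G = wmulZPi π F G - wmulZPi π F' G := by
  funext m
  show (∑ᶠ p : ℕ × ℤ, moyalTerm yD π p.1 (F p.2 - F' p.2) (G (m - p.1 - p.2)))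
      = (∑ᶠ p : ℕ × ℤ, moyalTerm yD π p.1 (F p.2) (G (m - p.1 - p.2)))
        - ∑ᶠ p : ℕ × ℤ, moyalTerm yD π p.1 (F' p.2) (G (m - p.1 - p.2))
  have h : ∀ p : ℕ × ℤ,
      moyalTerm yD π p.1 (F p.2 - F' p.2) (G (m - p.1 - p.2))
        = moyalTerm yD π p.1 (F p.2) (G (m - p.1 - p.2))
          + (-1 : ℂ) • moyalTerm yD π p.1 (F' p.2) (G (m - p.1 - p.2)) := by
    intro p
    rw [moyalTerm_sub_left, neg_one_smul, sub_eq_add_neg]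
  refine Eq.trans (finsum_congr h) ?_
  rw [finsum_add_distrib (moyal_finite' π hF hG m)
    (moyal_finite π hF' hG m fun _ => (-1 : ℂ)), sub_eq_add_neg]
  congr 1
  exact Eq.trans (finsum_congr fun p => neg_one_smul ℂ _) (finsum_neg_distrib _)

lemma EulZ_wmulZPi (π : Matrix (Fin N) (Fin N) ℂ) {F G : WaZ N} {cF cG : ℤ}
    (hF : LB cF F) (hG : LB cG G) :
    EulZ (wmulZPi π F G)
      = wmulZPi π (EulZ F) G + wmulZPi π F (EulZ G) + Complex.I • kTZ π F G := by
  funext m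
  have e0 : EulZ (wmulZPi π F G) m
      = ∑ p ∈ Finset.range ((m - cF - cG).toNat + 1) ×ˢ Finset.Icc cF (m - cG),
          EulW (moyalTerm yD π p.1 (F p.2) (G (m - p.1 - p.2))) := by
    show EulW (∑ᶠ p : ℕ × ℤ, moyalTerm yD π p.1 (F p.2) (G (m - p.1 - p.2))) = _
    rw [finsum_eq_finset_sum_of_support_subset _ (moyal_support π hF hG m), EulW_sum]
  have e1 : wmulZPi π (EulZ F) G m
      = ∑ p ∈ Finset.range ((m - cF - cG).toNat + 1) ×ˢ Finset.Icc cF (m - cG),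
          moyalTerm yD π p.1 (EulW (F p.2)) (G (m - p.1 - p.2)) :=
    finsum_eq_finset_sum_of_support_subset _ (moyal_support π (LB_EulZ hF) hG m)
  have e2 : wmulZPi π F (EulZ G) m
      = ∑ p ∈ Finset.range ((m - cF - cG).toNat + 1) ×ˢ Finset.Icc cF (m - cG),
          moyalTerm yD π p.1 (F p.2) (EulW (G (m - p.1 - p.2))) :=
    finsum_eq_finset_sum_of_support_subset _ (moyal_support π hF (LB_EulZ hG) m)
  have e3 : (Complex.I • kTZ π F G) m
      = ∑ p ∈ Finset.range ((m - cF - cG).toNat + 1) ×ˢ Finset.Icc cF (m - cG),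
          Complex.I • ((p.1 : ℂ) • moyalTerm yD π p.1 (F p.2) (G (m - p.1 - p.2))) := by
    show Complex.I • (∑ᶠ p : ℕ × ℤ,
        ((p.1 : ℕ) : ℂ) • moyalTerm yD π p.1 (F p.2) (G (m - p.1 - p.2))) = _
    rw [finsum_eq_finset_sum_of_support_subset _
      (moyal_support_w π hF hG m fun p => ((p.1 : ℕ) : ℂ)), Finset.smul_sum]
  rw [Pi.add_apply, Pi.add_apply, e0, e1, e2, e3, ← Finset.sum_add_distrib,
    ← Finset.sum_add_distrib]
  refine Finset.sum_congr rfl fun p _ => ?_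
  rw [EulW_moyalTerm, smul_smul]

lemma hDZ_wmulZPi (π : Matrix (Fin N) (Fin N) ℂ) {F G : WaZ N} {cF cG : ℤ}
    (hF : LB cF F) (hG : LB cG G) :
    hDZ (wmulZPi π F G)
      = wmulZPi π (hDZ F) G + wmulZPi π F (hDZ G) + shiftZ (kTZ π F G) := by
  funext m
  have e0 : hDZ (wmulZPi π F G) m
      = ∑ p ∈ Finset.range ((m + 1 - cF - cG).toNat + 1) ×ˢ Finset.Icc cF (m + 1 - cG),
          ((m + 1 : ℤ) : ℂ) • moyalTerm yD π p.1 (F p.2) (G (m + 1 - p.1 - p.2)) := by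
    show ((m + 1 : ℤ) : ℂ) • (∑ᶠ p : ℕ × ℤ,
        moyalTerm yD π p.1 (F p.2) (G (m + 1 - p.1 - p.2))) = _
    rw [finsum_eq_finset_sum_of_support_subset _ (moyal_support π hF hG (m + 1)),
      Finset.smul_sum]
  have e1 : wmulZPi π (hDZ F) G m
      = ∑ p ∈ Finset.range ((m + 1 - cF - cG).toNat + 1) ×ˢ Finset.Icc cF (m + 1 - cG),
          ((p.2 : ℤ) : ℂ) • moyalTerm yD π p.1 (F p.2) (G (m + 1 - p.1 - p.2)) := by
    have s1 : wmulZPi π (hDZ F) G m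
        = ∑ᶠ p : ℕ × ℤ, ((p.2 : ℤ) : ℂ) • moyalTerm yD π p.1 (F p.2)
            (G (m + 1 - p.1 - p.2)) := by
      show (∑ᶠ p : ℕ × ℤ, moyalTerm yD π p.1 (((p.2 + 1 : ℤ) : ℂ) • F (p.2 + 1))
          (G (m - p.1 - p.2))) = _
      refine finsum_eq_of_bijective (fun p : ℕ × ℤ => (p.1, p.2 + 1))
        ⟨fun p q h => ?_, fun p => ⟨(p.1, p.2 - 1), by simp⟩⟩ fun p => ?_
      · simp only [Prod.mk.injEq] at h
        exact Prod.ext h.1 (by omega)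
      · have h : m + 1 - (p.1 : ℤ) - (p.2 + 1) = m - p.1 - p.2 := by ring
        show moyalTerm yD π p.1 (((p.2 + 1 : ℤ) : ℂ) • F (p.2 + 1)) (G (m - p.1 - p.2))
            = ((p.2 + 1 : ℤ) : ℂ) • moyalTerm yD π p.1 (F (p.2 + 1))
                (G (m + 1 - p.1 - (p.2 + 1)))
        rw [h, moyalTerm_smul_left]
    rw [s1]
    exact finsum_eq_finset_sum_of_support_subset _
      (moyal_support_w π hF hG (m + 1) fun p => ((p.2 : ℤ) : ℂ))
  have e2 : wmulZPi π F (hDZ G) m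
      = ∑ p ∈ Finset.range ((m + 1 - cF - cG).toNat + 1) ×ˢ Finset.Icc cF (m + 1 - cG),
          ((m + 1 - p.1 - p.2 : ℤ) : ℂ) • moyalTerm yD π p.1 (F p.2)
            (G (m + 1 - p.1 - p.2)) := by
    have s2 : wmulZPi π F (hDZ G) m
        = ∑ᶠ p : ℕ × ℤ, ((m + 1 - p.1 - p.2 : ℤ) : ℂ) • moyalTerm yD π p.1 (F p.2)
            (G (m + 1 - p.1 - p.2)) := by
      show (∑ᶠ p : ℕ × ℤ, moyalTerm yD π p.1 (F p.2)
          (((m - p.1 - p.2 + 1 : ℤ) : ℂ) • G (m - p.1 - p.2 + 1))) = _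
      refine finsum_congr fun p => ?_
      have h : m - (p.1 : ℤ) - p.2 + 1 = m + 1 - p.1 - p.2 := by ring
      rw [h, moyalTerm_smul_right]
    rw [s2]
    exact finsum_eq_finset_sum_of_support_subset _
      (moyal_support_w π hF hG (m + 1) fun p => ((m + 1 - p.1 - p.2 : ℤ) : ℂ))
  have e3 : shiftZ (kTZ π F G) m
      = ∑ p ∈ Finset.range ((m + 1 - cF - cG).toNat + 1) ×ˢ Finset.Icc cF (m + 1 - cG),
          ((p.1 : ℕ) : ℂ) • moyalTerm yD π p.1 (F p.2) (G (m + 1 - p.1 - p.2)) :=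
    finsum_eq_finset_sum_of_support_subset _
      (moyal_support_w π hF hG (m + 1) fun p => ((p.1 : ℕ) : ℂ))
  rw [Pi.add_apply, Pi.add_apply, e0, e1, e2, e3, ← Finset.sum_add_distrib,
    ← Finset.sum_add_distrib]
  refine Finset.sum_congr rfl fun p _ => ?_
  rw [← add_smul, ← add_smul]
  congr 1
  push_cast
  ring

lemma moyalTerm_sub_right (π : Matrix (Fin N) (Fin N) ℂ) (k : ℕ) (a b b' : Wc N) :
    moyalTerm yD π k a (b - b') = moyalTerm yD π k a b - moyalTerm yD π k a b' := by
  have h := moyalTerm_add_right π k a b' (b - b')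
  rw [add_sub_cancel] at h
  rw [h]; abel

lemma wmulZPi_sub_right (π : Matrix (Fin N) (Fin N) ℂ) {F G G' : WaZ N} {cF cG cG' : ℤ}
    (hF : LB cF F) (hG : LB cG G) (hG' : LB cG' G') :
    wmulZPi π F (G - G') = wmulZPi π F G - wmulZPi π F G' := by
  funext m
  show (∑ᶠ p : ℕ × ℤ, moyalTerm yD π p.1 (F p.2) (G (m - p.1 - p.2) - G' (m - p.1 - p.2)))
      = (∑ᶠ p : ℕ × ℤ, moyalTerm yD π p.1 (F p.2) (G (m - p.1 - p.2)))
        - ∑ᶠ p : ℕ × ℤ, moyalTerm yD π p.1 (F p.2) (G' (m - p.1 - p.2))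
  have h : ∀ p : ℕ × ℤ,
      moyalTerm yD π p.1 (F p.2) (G (m - p.1 - p.2) - G' (m - p.1 - p.2))
        = moyalTerm yD π p.1 (F p.2) (G (m - p.1 - p.2))
          + (-1 : ℂ) • moyalTerm yD π p.1 (F p.2) (G' (m - p.1 - p.2)) := by
    intro p
    rw [moyalTerm_sub_right, neg_one_smul, sub_eq_add_neg]
  refine Eq.trans (finsum_congr h) ?_
  rw [finsum_add_distrib (moyal_finite' π hF hG m)
    (moyal_finite π hF hG' m fun _ => (-1 : ℂ)), sub_eq_add_neg]
  congr 1
  exact Eq.trans (finsum_congr fun p => neg_one_smul ℂ _) (finsum_neg_distrib _)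

lemma hDZ_finset_sum {α : Type*} (s : Finset α) (f : α → WaZ N) :
    hDZ (∑ i ∈ s, f i) = ∑ i ∈ s, hDZ (f i) := by
  funext m; simp only [hDZ, Finset.sum_apply, Finset.smul_sum]

lemma shiftZ_finset_sum {α : Type*} (s : Finset α) (f : α → WaZ N) :
    shiftZ (∑ i ∈ s, f i) = ∑ i ∈ s, shiftZ (f i) := by
  funext m; simp only [shiftZ, Finset.sum_apply]

lemma EulZ_finset_sum {α : Type*} (s : Finset α) (f : α → WaZ N) :
    EulZ (∑ i ∈ s, f i) = ∑ i ∈ s, EulZ (f i) := by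
  funext m; simp only [EulZ, Finset.sum_apply, EulW_sum]

lemma yDaZ_hDZ (i : Fin N) (w : WaZ N) : yDaZ i (hDZ w) = hDZ (yDaZ i w) := by
  funext m; exact yD_smul i _ _

lemma yDaZ_EulZ (i : Fin N) (w : WaZ N) :
    yDaZ i (EulZ w) = EulZ (yDaZ i w) - (Complex.I / 2) • yDaZ i w := by
  funext m
  show yD i (EulW (w m)) = EulW (yD i (w m)) - (Complex.I / 2) • yD i (w m)
  rw [EulW_yD]; abel

end Aux

section FormAux

variable {n : ℕ}

lemma PS_LB {u : WFZ n} (h : PSupp u) (S : Finset (Fin (2 * n))) (x : Pt n) :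
    LB 0 (u S x) := fun m hm => h S x m hm

lemma c1Za_eq {F G : WaZ (2 * n)} (hF : LB 0 F) (hG : LB 0 G) :
    c1Za F G = shiftZ (kTZ (stdPi n) F G) := by
  show hDZ (wmulZ F G) - wmulZ (hDZ F) G - wmulZ F (hDZ G) = _
  simp only [wmulZ]
  rw [hDZ_wmulZPi (stdPi n) hF hG]; abel

lemma c1Za_zero_left (G : WaZ (2 * n)) : c1Za 0 G = 0 := by
  show hDZ (wmulZ 0 G) - wmulZ (hDZ 0) G - wmulZ 0 (hDZ G) = 0
  simp only [wmulZ, hDZ_zero, wmulZPi_zero_left, hDZ_zero, sub_self, sub_zero]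

lemma c1Za_zero_right (F : WaZ (2 * n)) : c1Za F 0 = 0 := by
  show hDZ (wmulZ F 0) - wmulZ (hDZ F) 0 - wmulZ F (hDZ 0) = 0
  simp only [wmulZ, hDZ_zero, wmulZPi_zero_right, hDZ_zero, sub_self, sub_zero]

lemma wmul_hDZ_right (F G : WaZ (2 * n)) :
    wmulZ F (hDZ G) = hDZ (wmulZ F G) - wmulZ (hDZ F) G - c1Za F G := by
  show _ = hDZ (wmulZ F G) - wmulZ (hDZ F) G
      - (hDZ (wmulZ F G) - wmulZ (hDZ F) G - wmulZ F (hDZ G))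
  abel

lemma wmul_hDZ_left (F G : WaZ (2 * n)) :
    wmulZ (hDZ F) G = hDZ (wmulZ F G) - wmulZ F (hDZ G) - c1Za F G := by
  show _ = hDZ (wmulZ F G) - wmulZ F (hDZ G)
      - (hDZ (wmulZ F G) - wmulZ (hDZ F) G - wmulZ F (hDZ G))
  abel

lemma wmul_EulZ_right {F G : WaZ (2 * n)} (hF : LB 0 F) (hG : LB 0 G) :
    wmulZ F (EulZ G)
      = EulZ (wmulZ F G) - wmulZ (EulZ F) G - Complex.I • kTZ (stdPi n) F G := by
  simp only [wmulZ]
  rw [EulZ_wmulZPi (stdPi n) hF hG]; abel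

lemma wmul_EulZ_left {F G : WaZ (2 * n)} (hF : LB 0 F) (hG : LB 0 G) :
    wmulZ (EulZ F) G
      = EulZ (wmulZ F G) - wmulZ F (EulZ G) - Complex.I • kTZ (stdPi n) F G := by
  simp only [wmulZ]
  rw [EulZ_wmulZPi (stdPi n) hF hG]; abel

lemma key1L {u v : WaZ (2 * n)} (hu : LB 0 u) (hv : LB 0 v) :
    wmulZ (hDZ (Complex.I • shiftZ u)) v
      = Complex.I • shiftZ (wmulZ (hDZ u) v)
        - Complex.I • shiftZ (shiftZ (wmulZ u v)) := by
  rw [hDZ_smul, hDZ_shiftZ, smul_sub]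
  simp only [wmulZ]
  rw [wmulZPi_sub_left (stdPi n) (LB_smul _ (LB_shiftZ (LB_hDZ hu)))
    (LB_smul _ (LB_shiftZ (LB_shiftZ hu))) hv,
    wmulZPi_smul_left, wmulZPi_smul_left, wmulZPi_shift_left, wmulZPi_shift_left,
    wmulZPi_shift_left]

lemma key1R {u v : WaZ (2 * n)} (hu : LB 0 u) (hv : LB 0 v) :
    wmulZ v (hDZ (Complex.I • shiftZ u))
      = Complex.I • shiftZ (wmulZ v (hDZ u))
        - Complex.I • shiftZ (shiftZ (wmulZ v u)) := by
  rw [hDZ_smul, hDZ_shiftZ, smul_sub]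
  simp only [wmulZ]
  rw [wmulZPi_sub_right (stdPi n) hv (LB_smul _ (LB_shiftZ (LB_hDZ hu)))
    (LB_smul _ (LB_shiftZ (LB_shiftZ hu))),
    wmulZPi_smul_right, wmulZPi_smul_right, wmulZPi_shift_right, wmulZPi_shift_right,
    wmulZPi_shift_right]

lemma key2L (u v : WaZ (2 * n)) :
    wmulZ (Complex.I • shiftZ u) v = Complex.I • shiftZ (wmulZ u v) := by
  simp only [wmulZ]
  rw [wmulZPi_smul_left, wmulZPi_shift_left]

lemma key2R (u v : WaZ (2 * n)) :
    wmulZ v (Complex.I • shiftZ u) = Complex.I • shiftZ (wmulZ v u) := by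
  simp only [wmulZ]
  rw [wmulZPi_smul_right, wmulZPi_shift_right]

/-- The auxiliary `Σ_k k ℏ^k B_k`-form pairing on `W⁺`-valued forms. -/
def KF (u v : WFZ n) : WFZ n :=
  fun S x => ∑ S1 ∈ S.powerset,
    shuffleSign S1 (S \ S1) • kTZ (stdPi n) (u S1 x) (v (S \ S1) x)

lemma EulZ_neg (u : WaZ (2 * n)) : EulZ (-u) = -EulZ u := by
  funext m; exact EulW_neg _

lemma deltaZ_hDZF (a : WFZ n) (S : Finset (Fin (2 * n))) (x : Pt n) :
    deltaZ (hDZF a) S x = hDZ (deltaZ a S x) := by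
  unfold deltaZ
  rw [hDZ_finset_sum]
  refine Finset.sum_congr rfl fun i _ => ?_
  rw [show yDaZ i (hDZF a (S.erase i) x) = hDZ (yDaZ i (a (S.erase i) x)) from
    yDaZ_hDZ i _, hDZ_smul]

lemma deltaZ_EulZF (a : WFZ n) (S : Finset (Fin (2 * n))) (x : Pt n) :
    deltaZ (EulZF a) S x = EulZ (deltaZ a S x) - (Complex.I / 2) • deltaZ a S x := by
  unfold deltaZ
  rw [EulZ_finset_sum, Finset.smul_sum, ← Finset.sum_sub_distrib]
  refine Finset.sum_congr rfl fun i _ => ?_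
  rw [show yDaZ i (EulZF a (S.erase i) x)
      = EulZ (yDaZ i (a (S.erase i) x)) - (Complex.I / 2) • yDaZ i (a (S.erase i) x) from
    yDaZ_EulZ i _, smul_sub, smul_comm (insSign S i) (Complex.I / 2), EulZ_smul]

lemma xDZ_hDZ (f : Pt n → WaZ (2 * n))
    (hf : ∀ m β, ContDiff ℝ (⊤ : ℕ∞) fun x => MvPowerSeries.coeff (R := ℂ) β (f x m))
    (i : Fin (2 * n)) (x : Pt n) :
    xDZ i (fun x' => hDZ (f x')) x = hDZ (xDZ i f x) := by
  funext m
  apply MvPowerSeries.ext; intro β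
  have hd : DifferentiableAt ℝ (fun x' => MvPowerSeries.coeff (R := ℂ) β (f x' (m + 1))) x :=
    ((hf (m + 1) β).differentiable (by simp)).differentiableAt
  have hR : MvPowerSeries.coeff (R := ℂ) β (hDZ (xDZ i f x) m)
      = ((m + 1 : ℤ) : ℂ) * MvPowerSeries.coeff (R := ℂ) β (xDZ i f x (m + 1)) := by
    show MvPowerSeries.coeff (R := ℂ) β (((m + 1 : ℤ) : ℂ) • xDZ i f x (m + 1)) = _
    rw [map_smul, smul_eq_mul]
  rw [hR]
  show fderiv ℝ (fun x' => MvPowerSeries.coeff (R := ℂ) β (((m + 1 : ℤ) : ℂ) • f x' (m + 1))) x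
      (Pi.single i 1)
    = ((m + 1 : ℤ) : ℂ) * fderiv ℝ (fun x' => MvPowerSeries.coeff (R := ℂ) β (f x' (m + 1))) x
        (Pi.single i 1)
  have he : (fun x' => MvPowerSeries.coeff (R := ℂ) β (((m + 1 : ℤ) : ℂ) • f x' (m + 1)))
      = fun x' => ((m + 1 : ℤ) : ℂ) * MvPowerSeries.coeff (R := ℂ) β (f x' (m + 1)) := by
    funext x'; rw [map_smul, smul_eq_mul]
  rw [he, fderiv_const_mul hd, ContinuousLinearMap.smul_apply, smul_eq_mul]

lemma xDZ_EulZ (f : Pt n → WaZ (2 * n))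
    (hf : ∀ m β, ContDiff ℝ (⊤ : ℕ∞) fun x => MvPowerSeries.coeff (R := ℂ) β (f x m))
    (i : Fin (2 * n)) (x : Pt n) :
    xDZ i (fun x' => EulZ (f x')) x = EulZ (xDZ i f x) := by
  funext m
  apply MvPowerSeries.ext; intro β
  have hd : DifferentiableAt ℝ (fun x' => MvPowerSeries.coeff (R := ℂ) β (f x' m)) x :=
    ((hf m β).differentiable (by simp)).differentiableAt
  show fderiv ℝ (fun x' => MvPowerSeries.coeff (R := ℂ) β (EulW (f x' m))) x (Pi.single i 1)
    = -Complex.I / 2 * (∑ j : Fin (2 * n), ((β j : ℕ) : ℂ)) *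
        fderiv ℝ (fun x' => MvPowerSeries.coeff (R := ℂ) β (f x' m)) x (Pi.single i 1)
  have he : (fun x' => MvPowerSeries.coeff (R := ℂ) β (EulW (f x' m)))
      = fun x' => (-Complex.I / 2 * (∑ j : Fin (2 * n), ((β j : ℕ) : ℂ))) *
          MvPowerSeries.coeff (R := ℂ) β (f x' m) := rfl
  rw [he, fderiv_const_mul hd, ContinuousLinearMap.smul_apply, smul_eq_mul]

lemma extDZ_hDZF (a : WFZ n) (has : WFZ.Smooth a) (S : Finset (Fin (2 * n))) (x : Pt n) :
    extDZ (hDZF a) S x = hDZ (extDZ a S x) := by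
  unfold extDZ
  rw [hDZ_finset_sum]
  refine Finset.sum_congr rfl fun i _ => ?_
  rw [show xDZ i (hDZF a (S.erase i)) x = hDZ (xDZ i (a (S.erase i)) x) from
    xDZ_hDZ _ (fun m β => has _ m β) i x, hDZ_smul]

lemma extDZ_EulZF (a : WFZ n) (has : WFZ.Smooth a) (S : Finset (Fin (2 * n))) (x : Pt n) :
    extDZ (EulZF a) S x = EulZ (extDZ a S x) := by
  unfold extDZ
  rw [EulZ_finset_sum]
  refine Finset.sum_congr rfl fun i _ => ?_
  rw [show xDZ i (EulZF a (S.erase i)) x = EulZ (xDZ i (a (S.erase i)) x) from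
    xDZ_EulZ _ (fun m β => has _ m β) i x, EulZ_smul]

lemma wMulZF_hD_right (r a : WFZ n) (S : Finset (Fin (2 * n))) (x : Pt n) :
    wMulZF r (hDZF a) S x
      = hDZ (wMulZF r a S x) - wMulZF (hDZF r) a S x - c1ZF r a S x := by
  unfold wMulZF c1ZF
  rw [hDZ_finset_sum, ← Finset.sum_sub_distrib, ← Finset.sum_sub_distrib]
  refine Finset.sum_congr rfl fun S1 _ => ?_
  rw [show wmulZ (r S1 x) (hDZF a (S \ S1) x)
      = hDZ (wmulZ (r S1 x) (a (S \ S1) x)) - wmulZ (hDZ (r S1 x)) (a (S \ S1) x)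
        - c1Za (r S1 x) (a (S \ S1) x) from wmul_hDZ_right _ _,
    smul_sub, smul_sub, hDZ_smul]
  rfl

lemma wMulZF_hD_left (a r : WFZ n) (S : Finset (Fin (2 * n))) (x : Pt n) :
    wMulZF (hDZF a) r S x
      = hDZ (wMulZF a r S x) - wMulZF a (hDZF r) S x - c1ZF a r S x := by
  unfold wMulZF c1ZF
  rw [hDZ_finset_sum, ← Finset.sum_sub_distrib, ← Finset.sum_sub_distrib]
  refine Finset.sum_congr rfl fun S1 _ => ?_
  rw [show wmulZ (hDZF a S1 x) (r (S \ S1) x)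
      = hDZ (wmulZ (a S1 x) (r (S \ S1) x)) - wmulZ (a S1 x) (hDZ (r (S \ S1) x))
        - c1Za (a S1 x) (r (S \ S1) x) from wmul_hDZ_left _ _,
    smul_sub, smul_sub, hDZ_smul]
  rfl

lemma wMulZF_E_right (r a : WFZ n) (hrp : PSupp r) (hap : PSupp a)
    (S : Finset (Fin (2 * n))) (x : Pt n) :
    wMulZF r (EulZF a) S x
      = EulZ (wMulZF r a S x) - wMulZF (EulZF r) a S x - Complex.I • KF r a S x := by
  unfold wMulZF KF
  rw [EulZ_finset_sum, Finset.smul_sum, ← Finset.sum_sub_distrib, ← Finset.sum_sub_distrib]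
  refine Finset.sum_congr rfl fun S1 _ => ?_
  rw [show wmulZ (r S1 x) (EulZF a (S \ S1) x)
      = EulZ (wmulZ (r S1 x) (a (S \ S1) x)) - wmulZ (EulZ (r S1 x)) (a (S \ S1) x)
        - Complex.I • kTZ (stdPi n) (r S1 x) (a (S \ S1) x) from
      wmul_EulZ_right (PS_LB hrp S1 x) (PS_LB hap _ x),
    smul_sub, smul_sub, EulZ_smul, smul_comm (shuffleSign S1 (S \ S1)) Complex.I]
  rfl

lemma wMulZF_E_left (a r : WFZ n) (hap : PSupp a) (hrp : PSupp r)
    (S : Finset (Fin (2 * n))) (x : Pt n) :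
    wMulZF (EulZF a) r S x
      = EulZ (wMulZF a r S x) - wMulZF a (EulZF r) S x - Complex.I • KF a r S x := by
  unfold wMulZF KF
  rw [EulZ_finset_sum, Finset.smul_sum, ← Finset.sum_sub_distrib, ← Finset.sum_sub_distrib]
  refine Finset.sum_congr rfl fun S1 _ => ?_
  rw [show wmulZ (EulZF a S1 x) (r (S \ S1) x)
      = EulZ (wmulZ (a S1 x) (r (S \ S1) x)) - wmulZ (a S1 x) (EulZ (r (S \ S1) x))
        - Complex.I • kTZ (stdPi n) (a S1 x) (r (S \ S1) x) from
      wmul_EulZ_left (PS_LB hap S1 x) (PS_LB hrp _ x),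
    smul_sub, smul_sub, EulZ_smul, smul_comm (shuffleSign S1 (S \ S1)) Complex.I]
  rfl

lemma shiftZ_KF (u v : WFZ n) (hu : PSupp u) (hv : PSupp v)
    (S : Finset (Fin (2 * n))) (x : Pt n) :
    shiftZ (KF u v S x) = c1ZF u v S x := by
  unfold KF c1ZF
  rw [shiftZ_finset_sum]
  refine Finset.sum_congr rfl fun S1 _ => ?_
  rw [shiftZ_smul, ← c1Za_eq (PS_LB hu S1 x) (PS_LB hv _ x)]

lemma wMulZF_rdot_left (r a : WFZ n) (hrp : PSupp r) (hap : PSupp a)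
    (S : Finset (Fin (2 * n))) (x : Pt n) :
    wMulZF (hDZF fun S x => Complex.I • shiftZ (r S x)) a S x
      = Complex.I • shiftZ (wMulZF (hDZF r) a S x)
        - Complex.I • shiftZ (shiftZ (wMulZF r a S x)) := by
  unfold wMulZF
  rw [shiftZ_finset_sum, shiftZ_finset_sum, shiftZ_finset_sum, Finset.smul_sum,
    Finset.smul_sum, ← Finset.sum_sub_distrib]
  refine Finset.sum_congr rfl fun S1 _ => ?_
  rw [show wmulZ ((hDZF fun S x => Complex.I • shiftZ (r S x)) S1 x) (a (S \ S1) x)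
      = Complex.I • shiftZ (wmulZ (hDZ (r S1 x)) (a (S \ S1) x))
        - Complex.I • shiftZ (shiftZ (wmulZ (r S1 x) (a (S \ S1) x))) from
      key1L (PS_LB hrp S1 x) (PS_LB hap _ x),
    smul_sub, shiftZ_smul, shiftZ_smul, shiftZ_smul,
    smul_comm Complex.I (shuffleSign S1 (S \ S1)),
    smul_comm Complex.I (shuffleSign S1 (S \ S1))]
  rfl

lemma wMulZF_rdot_right (r a : WFZ n) (hrp : PSupp r) (hap : PSupp a)
    (S : Finset (Fin (2 * n))) (x : Pt n) :
    wMulZF a (hDZF fun S x => Complex.I • shiftZ (r S x)) S x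
      = Complex.I • shiftZ (wMulZF a (hDZF r) S x)
        - Complex.I • shiftZ (shiftZ (wMulZF a r S x)) := by
  unfold wMulZF
  rw [shiftZ_finset_sum, shiftZ_finset_sum, shiftZ_finset_sum, Finset.smul_sum,
    Finset.smul_sum, ← Finset.sum_sub_distrib]
  refine Finset.sum_congr rfl fun S1 _ => ?_
  rw [show wmulZ (a S1 x) ((hDZF fun S x => Complex.I • shiftZ (r S x)) (S \ S1) x)
      = Complex.I • shiftZ (wmulZ (a S1 x) (hDZ (r (S \ S1) x)))
        - Complex.I • shiftZ (shiftZ (wmulZ (a S1 x) (r (S \ S1) x))) from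
      key1R (PS_LB hrp _ x) (PS_LB hap S1 x),
    smul_sub, shiftZ_smul, shiftZ_smul, shiftZ_smul,
    smul_comm Complex.I (shuffleSign S1 (S \ S1)),
    smul_comm Complex.I (shuffleSign S1 (S \ S1))]
  rfl

lemma wMulZF_Er_left (r a : WFZ n) (S : Finset (Fin (2 * n))) (x : Pt n) :
    wMulZF (fun S x => Complex.I • shiftZ (EulZF r S x)) a S x
      = Complex.I • shiftZ (wMulZF (EulZF r) a S x) := by
  unfold wMulZF
  rw [shiftZ_finset_sum, Finset.smul_sum]
  refine Finset.sum_congr rfl fun S1 _ => ?_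
  rw [show wmulZ (Complex.I • shiftZ (EulZF r S1 x)) (a (S \ S1) x)
      = Complex.I • shiftZ (wmulZ (EulZF r S1 x) (a (S \ S1) x)) from key2L _ _,
    shiftZ_smul, smul_comm Complex.I (shuffleSign S1 (S \ S1))]

lemma wMulZF_Er_right (r a : WFZ n) (S : Finset (Fin (2 * n))) (x : Pt n) :
    wMulZF a (fun S x => Complex.I • shiftZ (EulZF r S x)) S x
      = Complex.I • shiftZ (wMulZF a (EulZF r) S x) := by
  unfold wMulZF
  rw [shiftZ_finset_sum, Finset.smul_sum]
  refine Finset.sum_congr rfl fun S1 _ => ?_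
  rw [show wmulZ (a S1 x) (Complex.I • shiftZ (EulZF r (S \ S1) x))
      = Complex.I • shiftZ (wmulZ (a S1 x) (EulZF r (S \ S1) x)) from key2R _ _,
    shiftZ_smul, smul_comm Complex.I (shuffleSign S1 (S \ S1))]

lemma c1ZF_sign (r a : WFZ n) (q : ℕ) (hr : isFormZ 1 r) (ha : isFormZ q a)
    (S : Finset (Fin (2 * n))) (x : Pt n) :
    ((-1 : ℂ) ^ (S.card - 1)) • c1ZF a r S x = ((-1 : ℂ) ^ q) • c1ZF a r S x := by
  by_cases hS : S.card = q + 1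
  · rw [hS]; norm_num
  · have hz : c1ZF a r S x = 0 := by
      unfold c1ZF
      refine Finset.sum_eq_zero fun S1 hS1 => ?_
      rw [Finset.mem_powerset] at hS1
      by_cases h1 : S1.card = q
      · have h2 : (S \ S1).card ≠ 1 := by
          rw [Finset.card_sdiff_of_subset hS1]
          have := Finset.card_le_card hS1
          omega
        have h3 : r (S \ S1) x = 0 := by rw [hr _ h2]; rfl
        rw [h3, c1Za_zero_right, smul_zero]
      · have h3 : a S1 x = 0 := by rw [ha _ h1]; rfl
        rw [h3, c1Za_zero_left, smul_zero]
    rw [hz, smul_zero, smul_zero]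

end FormAux

/-- For a `W`-valued 1-form `r` on `ℝ^{2n}`, `D = −δ + d + (i/ℏ)[r,·]`
and any `W`-valued form `a` of homogeneous degree `q` (working with Laurent
coefficients in `ℏ`):
(i) `[D, ∂/∂ℏ] a = −[(i r/ℏ)˙, a] − (i/ℏ)(c₁(r,a) − (−1)^q c₁(a,r))`;
(ii) `[D, E] a = (i/2) δa − [(i/ℏ) Er, a] + c₁(r,a) − (−1)^q c₁(a,r)`. -/
theorem commutators_with_fedosov (n q : ℕ) (r a : WFZ n)
    (hr : isFormZ 1 r) (hrs : WFZ.Smooth r) (hrp : PSupp r)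
    (ha : isFormZ q a) (has : WFZ.Smooth a) (hap : PSupp a) :
    (fedDZ r (hDZF a) - hDZF (fedDZ r a) =
      -comm1Z (hDZF fun S x => Complex.I • shiftZ (r S x)) a
        - fun S x =>
            Complex.I • shiftZ ((c1ZF r a - (-1 : ℂ) ^ q • c1ZF a r) S x)) ∧
    (fedDZ r (EulZF a) - EulZF (fedDZ r a) =
      (fun S x => (Complex.I / 2) • deltaZ a S x)
        - comm1Z (fun S x => Complex.I • shiftZ (EulZF r S x)) a
        + (c1ZF r a - (-1 : ℂ) ^ q • c1ZF a r)) := by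
  constructor
  · funext S x
    show (-deltaZ (hDZF a) S x + extDZ (hDZF a) S x
          + Complex.I • shiftZ (comm1Z r (hDZF a) S x))
        - hDZ (-deltaZ a S x + extDZ a S x + Complex.I • shiftZ (comm1Z r a S x))
      = -(comm1Z (hDZF fun S x => Complex.I • shiftZ (r S x)) a S x)
        - Complex.I • shiftZ (c1ZF r a S x - (-1 : ℂ) ^ q • c1ZF a r S x)
    rw [deltaZ_hDZF, extDZ_hDZF a has,
      show comm1Z r (hDZF a) S x
          = wMulZF r (hDZF a) S x
            - (-1 : ℂ) ^ (S.card - 1) • wMulZF (hDZF a) r S x from rfl,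
      wMulZF_hD_right r a S x, wMulZF_hD_left a r S x,
      show comm1Z (hDZF fun S x => Complex.I • shiftZ (r S x)) a S x
          = wMulZF (hDZF fun S x => Complex.I • shiftZ (r S x)) a S x
            - (-1 : ℂ) ^ (S.card - 1) •
                wMulZF a (hDZF fun S x => Complex.I • shiftZ (r S x)) S x from rfl,
      wMulZF_rdot_left r a hrp hap, wMulZF_rdot_right r a hrp hap,
      show comm1Z r a S x
          = wMulZF r a S x - (-1 : ℂ) ^ (S.card - 1) • wMulZF a r S x from rfl,
      ← c1ZF_sign r a q hr ha S x]
    simp only [hDZ_add, hDZ_neg, hDZ_sub, hDZ_smul, hDZ_shiftZ, shiftZ_sub, shiftZ_smul,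
      smul_sub]
    match_scalars <;> first
      | ring1
      | (ring_nf; rw [Complex.I_sq]; ring1)
      | (ring_nf; rw [Complex.I_mul_I]; ring1)
  · funext S x
    show (-deltaZ (EulZF a) S x + extDZ (EulZF a) S x
          + Complex.I • shiftZ (comm1Z r (EulZF a) S x))
        - EulZ (-deltaZ a S x + extDZ a S x + Complex.I • shiftZ (comm1Z r a S x))
      = (Complex.I / 2) • deltaZ a S x
        - (comm1Z (fun S x => Complex.I • shiftZ (EulZF r S x)) a S x)
        + (c1ZF r a S x - (-1 : ℂ) ^ q • c1ZF a r S x)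
    rw [deltaZ_EulZF, extDZ_EulZF a has,
      show comm1Z r (EulZF a) S x
          = wMulZF r (EulZF a) S x
            - (-1 : ℂ) ^ (S.card - 1) • wMulZF (EulZF a) r S x from rfl,
      wMulZF_E_right r a hrp hap, wMulZF_E_left a r hap hrp,
      show comm1Z (fun S x => Complex.I • shiftZ (EulZF r S x)) a S x
          = wMulZF (fun S x => Complex.I • shiftZ (EulZF r S x)) a S x
            - (-1 : ℂ) ^ (S.card - 1) •
                wMulZF a (fun S x => Complex.I • shiftZ (EulZF r S x)) S x from rfl,
      wMulZF_Er_left r a, wMulZF_Er_right r a,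
      show comm1Z r a S x
          = wMulZF r a S x - (-1 : ℂ) ^ (S.card - 1) • wMulZF a r S x from rfl,
      ← c1ZF_sign r a q hr ha S x,
      ← shiftZ_KF r a hrp hap S x, ← shiftZ_KF a r hap hrp S x]
    simp only [EulZ_add, EulZ_neg, EulZ_sub, EulZ_smul, EulZ_shiftZ, shiftZ_sub, shiftZ_smul,
      smul_sub, smul_smul, Complex.I_mul_I, neg_one_smul, neg_smul, one_smul]
    match_scalars <;> first
      | ring1
      | (ring_nf; rw [Complex.I_sq]; ring1)
      | (ring_nf; rw [Complex.I_mul_I]; ring1)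

end StarPaper
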